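/- arXiv:2212.13190 — 2 statements merged into one kernel-verified Lean document; each statement's English description precedes it below -/
import Mathlib

section
/- Let |K| = q², let C be a left ideal of R = K[G,Θ,α], and suppose α(x,y)^q = α(x,y) for all x, y ∈ G. Then the Hermitian dual of C equals the image under the adjoint map of the right annihilator of C^{(q)}: C^{⊥_h} = {â : a ∈ Ann_r(C^{(q)})}, where C^{(q)} = {Σ_g c_g^q ḡ : Σ_g c_g ḡ ∈ C}. -/
open Finset

variable {K : Type*} {G : Type*}

/-- Multiplication of the twisted skew group ring `K[G,Θ,α]`:
`(Σ_g a_g ḡ)·(Σ_h b_h h̄) = Σ_{g,h} a_g·Θ(g)(b_h)·α(g,h)·(gh)‾`. -/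
def tsMul [Field K] [Group G] [Fintype G] [DecidableEq G]
    (Θ : G →* RingAut K) (α : G → G → Kˣ) (a b : G → K) : G → K :=
  fun x => ∑ p : G × G, if p.1 * p.2 = x then a p.1 * Θ p.1 (b p.2) * (α p.1 p.2 : K) else 0

/-- The identity element `1̄` of the twisted skew group ring. -/
def tsOne [Field K] [Group G] [DecidableEq G] : (G → K) := fun x => if x = 1 then 1 else 0

/-- The adjoint map `a ↦ â = Σ_g Θ(g⁻¹)(a_g)·α(g,g⁻¹)·(g⁻¹)‾`. -/
def tsAdj [Field K] [Group G] (Θ : G →* RingAut K) (α : G → G → Kˣ) (a : G → K) : G → K :=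
  fun x => Θ x (a x⁻¹) * (α x⁻¹ x : K)

private lemma tsMul_apply' [Field K] [Group G] [Fintype G] [DecidableEq G]
    (Θ : G →* RingAut K) (α : G → G → Kˣ) (a b : G → K) (x : G) :
    tsMul Θ α a b x = ∑ g : G, a g * Θ g (b (g⁻¹ * x)) * (α g (g⁻¹ * x) : K) := by
  unfold tsMul
  rw [Fintype.sum_prod_type]
  refine Finset.sum_congr rfl fun g _ => ?_
  rw [Finset.sum_eq_single (g⁻¹ * x)]
  · simp
  · intro h _ hne
    rw [if_neg]
    intro he
    exact hne (by rw [← he, inv_mul_cancel_left])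
  · intro h; exact absurd (Finset.mem_univ _) h

/-- **Hermitian duality.** Let `|K| = q²`, let `C` be a left ideal of
`R = K[G,Θ,α]`, and suppose `α(x,y)^q = α(x,y)` for all `x,y ∈ G`.  Then the
Hermitian dual of `C` equals the image under the adjoint map of the right
annihilator of `C^{(q)}`: `C^{⊥_h} = {â : a ∈ Ann_r(C^{(q)})}`. -/
theorem stmt13 [Field K] [Fintype K] [Group G] [Fintype G] [DecidableEq G]
    (q : ℕ) (hq : Fintype.card K = q ^ 2)
    (Θ : G →* RingAut K) (α : G → G → Kˣ)
    (hnorm : ∀ g : G, α g 1 = 1 ∧ α 1 g = 1)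
    (hcoc : ∀ g₁ g₂ g₃ : G, α g₁ (g₂ * g₃) * α g₂ g₃ = α (g₁ * g₂) g₃ * α g₁ g₂)
    (hstab : ∀ g x y : G, Θ g ((α x y : K)) = (α x y : K))
    (hαq : ∀ x y : G, (α x y : K) ^ q = (α x y : K))
    (C : Submodule K (G → K))
    (hC : ∀ r : G → K, ∀ c ∈ C, tsMul Θ α r c ∈ C) :
    {b : G → K | ∀ c ∈ C, ∑ g : G, c g * (b g) ^ q = 0} =
      tsAdj Θ α '' {a : G → K | ∀ c ∈ C, tsMul Θ α (fun g => (c g) ^ q) a = 0} := by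
  have hq0 : q ≠ 0 := by
    rintro rfl
    have := Fintype.card_pos (α := K)
    rw [hq] at this
    simp at this
  have hFadd : ∀ x y : K, (x + y) ^ q = x ^ q + y ^ q := by
    intro x y
    obtain ⟨p, hp⟩ := CharP.exists K
    haveI := hp
    have hp' : p.Prime := CharP.char_is_prime K p
    haveI : Fact p.Prime := ⟨hp'⟩
    obtain ⟨n, hn⟩ := FiniteField.card K p
    have hdvd : q ∣ p ^ (n : ℕ) := by rw [← hn.2, hq]; exact dvd_pow_self q two_ne_zero
    obtain ⟨m, hm, rfl⟩ := (Nat.dvd_prime_pow hp').mp hdvd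
    exact add_pow_char_pow x y p m
  let F : K →+* K :=
    { toFun := fun x => x ^ q, map_one' := one_pow q,
      map_mul' := fun x y => mul_pow x y q, map_zero' := zero_pow hq0,
      map_add' := hFadd }
  have hFq : ∀ x : K, (x ^ q) ^ q = x := fun x => by
    rw [← pow_mul, ← sq, ← hq, FiniteField.pow_card]
  have hΘmul : ∀ (g h : G) (z : K), Θ g (Θ h z) = Θ (g * h) z := fun g h z => by
    rw [map_mul]; rfl
  have hΘinv : ∀ (g : G) (z : K), Θ g (Θ g⁻¹ z) = z := fun g z => by
    rw [hΘmul, mul_inv_cancel, map_one]; rfl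
  have hαsymm : ∀ g : G, (α g⁻¹ g : K) = (α g g⁻¹ : K) := by
    intro g
    have h := hcoc g g⁻¹ g
    rw [inv_mul_cancel, mul_inv_cancel, (hnorm g).1, (hnorm g).2, one_mul, one_mul] at h
    exact congrArg Units.val h
  have key : ∀ (c a : G → K), tsMul Θ α (fun g => c g ^ q) a 1
      = (∑ g : G, c g * (tsAdj Θ α a g) ^ q) ^ q := by
    intro c a
    rw [tsMul_apply']
    rw [show (∑ g : G, c g * (tsAdj Θ α a g) ^ q) ^ q
        = F (∑ g : G, c g * tsAdj Θ α a g ^ q) from rfl, map_sum]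
    refine Finset.sum_congr rfl fun g _ => ?_
    show c g ^ q * Θ g (a (g⁻¹ * 1)) * (α g (g⁻¹ * 1) : K)
        = (c g * tsAdj Θ α a g ^ q) ^ q
    rw [mul_one, show tsAdj Θ α a g = Θ g (a g⁻¹) * (α g⁻¹ g : K) from rfl,
        mul_pow, hαsymm, mul_pow, mul_pow, hFq, hαq, hαq, mul_assoc]
  ext b
  simp only [Set.mem_setOf_eq, Set.mem_image]
  constructor
  · intro hb
    have hex : ∃ a : G → K, tsAdj Θ α a = b := by
      refine ⟨fun y => Θ y (b y⁻¹) * ((α y y⁻¹ : K))⁻¹, funext fun x => ?_⟩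
      show Θ x (Θ x⁻¹ (b x⁻¹⁻¹) * ((α x⁻¹ x⁻¹⁻¹ : K))⁻¹) * (α x⁻¹ x : K) = b x
      simp only [inv_inv]
      rw [map_mul, hΘinv, map_inv₀, hstab, mul_assoc,
          inv_mul_cancel₀ (Units.ne_zero (α x⁻¹ x)), mul_one]
    obtain ⟨a, hadj⟩ := hex
    have hbq : ∀ y, b y = Θ y (a y⁻¹) * (α y⁻¹ y : K) := fun y => (congrFun hadj y).symm
    refine ⟨a, ?_, hadj⟩
    intro c hc
    funext x
    simp only [Pi.zero_apply]
    set d : G → K := tsMul Θ α (fun y => if y = x⁻¹ then (1 : K) else 0) c with hddef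
    have hdC : d ∈ C := hC _ c hc
    have hdapp : ∀ y, d y = Θ x⁻¹ (c (x * y)) * (α x⁻¹ (x * y) : K) := by
      intro y
      rw [hddef, tsMul_apply', Finset.sum_eq_single x⁻¹]
      · simp
      · intro g _ hne; simp [hne]
      · simp
    have hS : ∑ y : G, d y * (b y) ^ q = 0 := hb d hdC
    have hS2 : ∑ y : G, (d y * (b y) ^ q) ^ q = 0 := by
      have h2 : F (∑ y : G, d y * (b y) ^ q) = 0 := by rw [hS, map_zero]
      rw [map_sum] at h2
      exact h2
    have hTS : ∑ y : G, (d y * (b y) ^ q) ^ q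
        = Θ x⁻¹ (tsMul Θ α (fun g => c g ^ q) a x) * (α x⁻¹ x : K) := by
      rw [tsMul_apply', map_sum, Finset.sum_mul]
      refine Fintype.sum_equiv (Equiv.mulLeft x) _ _ fun y => ?_
      simp only [Equiv.coe_mulLeft]
      have hyy : (x * y)⁻¹ * x = y⁻¹ := by group
      rw [hyy, hdapp y, hbq y]
      have hcast : (α x⁻¹ (x * y) : K) * (α y y⁻¹ : K)
          = (α x⁻¹ x : K) * (α (x * y) y⁻¹ : K) := by
        have h := hcoc x⁻¹ (x * y) y⁻¹
        rw [mul_inv_cancel_right, inv_mul_cancel_left] at h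
        exact_mod_cast (mul_comm _ _).trans h.symm
      have e1 : (Θ y (a y⁻¹) * (α y⁻¹ y : K)) ^ q
          = Θ y (a y⁻¹) ^ q * (α y y⁻¹ : K) := by
        rw [mul_pow, hαsymm, hαq]
      rw [e1]
      have e2 : (Θ x⁻¹ (c (x * y)) * (α x⁻¹ (x * y) : K)
            * (Θ y (a y⁻¹) ^ q * (α y y⁻¹ : K))) ^ q
          = Θ x⁻¹ (c (x * y)) ^ q * (α x⁻¹ (x * y) : K)
            * (Θ y (a y⁻¹) * (α y y⁻¹ : K)) := by
        rw [mul_pow, mul_pow, mul_pow, hαq, hαq, hFq]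
      rw [e2, map_mul, map_mul, map_pow, hΘmul, inv_mul_cancel_left, hstab]
      linear_combination (Θ x⁻¹ (c (x * y)) ^ q * Θ y (a y⁻¹)) * hcast
    rw [hTS] at hS2
    rcases mul_eq_zero.mp hS2 with h | h
    · have := congrArg (Θ x) h
      rw [hΘinv, map_zero] at this
      exact this
    · exact absurd h (Units.ne_zero _)
  · rintro ⟨a, ha, rfl⟩ c hc
    have h1 := congrFun (ha c hc) 1
    rw [key c a] at h1
    simpa using (pow_eq_zero_iff hq0).mp (by simpa using h1)
end

section
/- Suppose α = α⁻¹ (i.e. α(x,y)² = 1 for all x,y ∈ G) and let C be a left ideal of R = K[G,Θ,α]. Then C is a Euclidean LCD code, i.e. R = C ⊕ C^⊥, if and only if there exists e ∈ R with e² = e = ê and C = Re. -/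
open Finset

variable {K : Type*} {G : Type*}

set_option linter.unusedSectionVars false

section aux
variable [Field K] [Group G] [Fintype G] [DecidableEq G]
variable (Θ : G →* RingAut K) (α : G → G → Kˣ)
variable (hnorm : ∀ g : G, α g 1 = 1 ∧ α 1 g = 1)
    (hcoc : ∀ g₁ g₂ g₃ : G, α g₁ (g₂ * g₃) * α g₂ g₃ = α (g₁ * g₂) g₃ * α g₁ g₂)
    (hstab : ∀ g x y : G, Θ g ((α x y : K)) = (α x y : K))
    (hα2 : ∀ x y : G, (α x y : K) ^ 2 = 1)


include hcoc in
lemma hcoK : ∀ g₁ g₂ g₃ : G, (α g₁ (g₂ * g₃) : K) * α g₂ g₃ = α (g₁ * g₂) g₃ * α g₁ g₂ := by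
  intro a b c
  have := congrArg (Units.val) (hcoc a b c)
  simpa using this

include hnorm hcoc hα2 in
lemma key1 (g h : G) : (α h h⁻¹ : K) * α (g * h) h⁻¹ = α g h := by
  have h1 := hcoK α hcoc g h h⁻¹
  rw [mul_inv_cancel] at h1
  have h2 : (α g 1 : K) = 1 := by rw [(hnorm g).1]; rfl
  rw [h2, one_mul] at h1
  have h3 := hα2 (g*h) h⁻¹
  calc (α h h⁻¹ : K) * α (g * h) h⁻¹ = (α (g*h) h⁻¹ * α g h) * α (g*h) h⁻¹ := by rw [h1]
    _ = ((α (g*h) h⁻¹ : K)^2) * α g h := by ring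
    _ = α g h := by rw [h3, one_mul]

include hnorm hcoc in
lemma alpha_inv_comm (x : G) : (α x⁻¹ x : K) = α x x⁻¹ := by
  have h1 := hcoK α hcoc x x⁻¹ x
  rw [inv_mul_cancel, mul_inv_cancel] at h1
  have h2 : (α x 1 : K) = 1 := by rw [(hnorm x).1]; rfl
  have h3 : (α 1 x : K) = 1 := by rw [(hnorm x).2]; rfl
  rw [h2, h3, one_mul, one_mul] at h1
  exact h1

include hnorm hcoc hα2 in
lemma key2 (x : G) : (α x x⁻¹ : K) * α x⁻¹ x = 1 := by
  rw [alpha_inv_comm α hnorm hcoc, ← sq, hα2]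

lemma theta_theta (g h : G) (v : K) : Θ g (Θ h v) = Θ (g * h) v := by
  rw [map_mul]; rfl

lemma tsMul_single (a b : G → K) (x : G) :
    tsMul Θ α a b x = ∑ g : G, a g * Θ g (b (g⁻¹ * x)) * (α g (g⁻¹ * x) : K) := by
  unfold tsMul
  rw [Fintype.sum_prod_type]
  refine Finset.sum_congr rfl fun g _ => ?_
  have h : ∀ h : G, (g * h = x) ↔ (h = g⁻¹ * x) := fun h => by
    constructor
    · rintro rfl; simp
    · rintro rfl; simp
  simp only [h]
  rw [Finset.sum_ite_eq' Finset.univ]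
  simp

include hnorm in
lemma tsOne_mul (b : G → K) : tsMul Θ α tsOne b = b := by
  funext x
  rw [tsMul_single]
  unfold tsOne
  simp only [ite_mul, one_mul, zero_mul]
  rw [Finset.sum_ite_eq' Finset.univ]
  have h3 : (α 1 x : K) = 1 := by rw [(hnorm _).2]; rfl
  simp [h3, map_one]

include hnorm hcoc hstab hα2 in
lemma tsAdj_invol (y : G → K) : tsAdj Θ α (tsAdj Θ α y) = y := by
  funext x
  unfold tsAdj
  simp only [inv_inv]
  rw [map_mul, theta_theta, mul_inv_cancel, map_one, hstab]
  have h1 : (1 : RingAut K) (y x) = y x := rfl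
  rw [h1, mul_assoc, key2 α hnorm hcoc hα2, mul_one]

abbrev ipE (a b : G → K) : K := ∑ g : G, a g * b g

def tsDelta (g : G) : G → K := fun h => if h = g then 1 else 0

lemma ipE_delta (g : G) (w : G → K) : ipE (tsDelta g) w = w g := by
  unfold ipE tsDelta
  simp only [ite_mul, one_mul, zero_mul]
  rw [Finset.sum_ite_eq' Finset.univ]
  simp

lemma tsMul_add_left (a a' b : G → K) :
    tsMul Θ α (a + a') b = tsMul Θ α a b + tsMul Θ α a' b := by
  funext x
  show tsMul Θ α (a + a') b x = tsMul Θ α a b x + tsMul Θ α a' b x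
  unfold tsMul
  rw [← Finset.sum_add_distrib]
  refine Finset.sum_congr rfl fun p _ => ?_
  by_cases h : p.1 * p.2 = x <;> simp [h, add_mul]

include hcoc hstab in
lemma tsMul_assoc (a b c : G → K) :
    tsMul Θ α (tsMul Θ α a b) c = tsMul Θ α a (tsMul Θ α b c) := by
  funext x
  rw [tsMul_single, tsMul_single]
  have hL : ∀ u : G, tsMul Θ α a b u * Θ u (c (u⁻¹ * x)) * (α u (u⁻¹ * x) : K)
      = ∑ g : G, a g * Θ g (b (g⁻¹ * u)) * (α g (g⁻¹ * u) : K) *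
          (Θ u (c (u⁻¹ * x)) * (α u (u⁻¹ * x) : K)) := by
    intro u
    rw [tsMul_single, Finset.sum_mul, Finset.sum_mul]
    exact Finset.sum_congr rfl fun g _ => by ring
  simp only [hL]
  rw [Finset.sum_comm]
  refine Finset.sum_congr rfl fun g _ => ?_
  have hR : a g * Θ g (tsMul Θ α b c (g⁻¹ * x)) * (α g (g⁻¹ * x) : K)
      = ∑ h : G, a g * (Θ g (b h) * Θ (g * h) (c (h⁻¹ * (g⁻¹ * x))) *
          (α h (h⁻¹ * (g⁻¹ * x)) : K)) * (α g (g⁻¹ * x) : K) := by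
    rw [tsMul_single, map_sum, Finset.mul_sum, Finset.sum_mul]
    refine Finset.sum_congr rfl fun h _ => ?_
    rw [map_mul, map_mul, theta_theta, hstab]
  rw [hR]
  refine (Fintype.sum_equiv (Equiv.mulLeft g) _ _ fun h => ?_).symm
  simp only [Equiv.coe_mulLeft, mul_inv_rev, inv_mul_cancel_left, mul_assoc]
  have hc := hcoK α hcoc g h (h⁻¹ * (g⁻¹ * x))
  rw [mul_inv_cancel_left] at hc
  linear_combination (a g * Θ g (b h) * Θ (g * h) (c (h⁻¹ * (g⁻¹ * x)))) * hc

include hnorm hcoc hstab hα2 in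
lemma ts_adjoint_identity (a y z : G → K) :
    ipE (tsMul Θ α a y) z = ipE a (tsMul Θ α z (tsAdj Θ α y)) := by
  unfold ipE
  have hL : ∀ x : G, tsMul Θ α a y x * z x
      = ∑ g : G, a g * Θ g (y (g⁻¹ * x)) * (α g (g⁻¹ * x) : K) * z x := by
    intro x; rw [tsMul_single, Finset.sum_mul]
  simp only [hL]
  rw [Finset.sum_comm]
  refine Finset.sum_congr rfl fun g _ => ?_
  have hR : a g * tsMul Θ α z (tsAdj Θ α y) g
      = ∑ u : G, a g * (z u * (Θ g (y (g⁻¹ * u)) * (α (g⁻¹ * u) (u⁻¹ * g) : K)) *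
          (α u (u⁻¹ * g) : K)) := by
    rw [tsMul_single, Finset.mul_sum]
    refine Finset.sum_congr rfl fun u _ => ?_
    unfold tsAdj
    rw [map_mul, theta_theta, hstab]
    have h1 : u * (u⁻¹ * g) = g := by rw [mul_inv_cancel_left]
    have h2 : (u⁻¹ * g)⁻¹ = g⁻¹ * u := by rw [mul_inv_rev, inv_inv]
    rw [h1, h2]
  rw [hR]
  refine Finset.sum_congr rfl fun x _ => ?_
  have hk := key1 α hnorm hcoc hα2 g (g⁻¹ * x)
  rw [mul_inv_rev, inv_inv, mul_inv_cancel_left] at hk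
  linear_combination (-(a g * Θ g (y (g⁻¹ * x)) * z x)) * hk

include hnorm hcoc hstab hα2 in
lemma tsAdj_mul (x y : G → K) :
    tsAdj Θ α (tsMul Θ α x y) = tsMul Θ α (tsAdj Θ α y) (tsAdj Θ α x) := by
  funext g
  have h1 := ts_adjoint_identity Θ α hnorm hcoc hstab hα2 (tsDelta g) (tsMul Θ α x y) tsOne
  rw [tsOne_mul Θ α hnorm, ipE_delta] at h1
  have h2 := ts_adjoint_identity Θ α hnorm hcoc hstab hα2 (tsMul Θ α (tsDelta g) x) y tsOne
  rw [tsOne_mul Θ α hnorm, tsMul_assoc Θ α hcoc hstab] at h2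
  have h3 := ts_adjoint_identity Θ α hnorm hcoc hstab hα2 (tsDelta g) x (tsAdj Θ α y)
  rw [ipE_delta] at h3
  rw [← h1, h2]
  exact h3

end aux

/-- Suppose `α = α⁻¹` and let `C` be a left ideal of
`R = K[G,Θ,α]`.  Then `C` is Euclidean LCD (`R = C ⊕ C^⊥`) iff `C = Re` for some
idempotent `e` with `e² = e = ê`. -/
theorem stmt15 [Field K] [Fintype K] [Group G] [Fintype G] [DecidableEq G]
    (Θ : G →* RingAut K) (α : G → G → Kˣ)
    (hnorm : ∀ g : G, α g 1 = 1 ∧ α 1 g = 1)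
    (hcoc : ∀ g₁ g₂ g₃ : G, α g₁ (g₂ * g₃) * α g₂ g₃ = α (g₁ * g₂) g₃ * α g₁ g₂)
    (hstab : ∀ g x y : G, Θ g ((α x y : K)) = (α x y : K))
    (hα2 : ∀ x y : G, (α x y : K) ^ 2 = 1)
    (C : Submodule K (G → K))
    (hC : ∀ r : G → K, ∀ c ∈ C, tsMul Θ α r c ∈ C) :
    ((∀ x ∈ C, (∀ c ∈ C, ∑ g : G, c g * x g = 0) → x = 0) ∧
     (∀ x : G → K, ∃ c ∈ C, ∃ b : G → K,
        (∀ c' ∈ C, ∑ g : G, c' g * b g = 0) ∧ x = c + b)) ↔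
      ∃ e : G → K, tsMul Θ α e e = e ∧ tsAdj Θ α e = e ∧
        (C : Set (G → K)) = {x | ∃ r : G → K, x = tsMul Θ α r e} := by
  constructor
  · rintro ⟨_h1, h2⟩
    obtain ⟨f, hfC, b, hb, hfb⟩ := h2 tsOne
    have stepA : ∀ c ∈ C, tsMul Θ α b (tsAdj Θ α c) = 0 := by
      intro c hc
      funext g
      show tsMul Θ α b (tsAdj Θ α c) g = 0
      have hA := ts_adjoint_identity Θ α hnorm hcoc hstab hα2 (tsDelta g) c b
      rw [ipE_delta] at hA
      have h0 : ipE (tsMul Θ α (tsDelta g) c) b = 0 := hb _ (hC _ _ hc)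
      rw [← hA]
      exact h0
    have stepB : ∀ c ∈ C, tsMul Θ α c (tsAdj Θ α f) = c := by
      intro c hc
      have e1 : tsAdj Θ α c = tsMul Θ α f (tsAdj Θ α c) := by
        calc tsAdj Θ α c = tsMul Θ α tsOne (tsAdj Θ α c) := (tsOne_mul Θ α hnorm _).symm
          _ = tsMul Θ α (f + b) (tsAdj Θ α c) := by rw [← hfb]
          _ = tsMul Θ α f (tsAdj Θ α c) + tsMul Θ α b (tsAdj Θ α c) := tsMul_add_left Θ α _ _ _
          _ = tsMul Θ α f (tsAdj Θ α c) := by rw [stepA c hc, add_zero]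
      calc tsMul Θ α c (tsAdj Θ α f)
          = tsMul Θ α (tsAdj Θ α (tsAdj Θ α c)) (tsAdj Θ α f) := by
            rw [tsAdj_invol Θ α hnorm hcoc hstab hα2]
        _ = tsAdj Θ α (tsMul Θ α f (tsAdj Θ α c)) := by
            rw [tsAdj_mul Θ α hnorm hcoc hstab hα2]
        _ = tsAdj Θ α (tsAdj Θ α c) := by rw [← e1]
        _ = c := tsAdj_invol Θ α hnorm hcoc hstab hα2 c
    have hfadj : tsAdj Θ α f = f := by
      calc tsAdj Θ α f = tsMul Θ α tsOne (tsAdj Θ α f) := (tsOne_mul Θ α hnorm _).symm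
        _ = tsMul Θ α (f + b) (tsAdj Θ α f) := by rw [← hfb]
        _ = tsMul Θ α f (tsAdj Θ α f) + tsMul Θ α b (tsAdj Θ α f) := tsMul_add_left Θ α _ _ _
        _ = tsMul Θ α f (tsAdj Θ α f) := by rw [stepA f hfC, add_zero]
        _ = f := stepB f hfC
    refine ⟨f, ?_, hfadj, ?_⟩
    · have h := stepB f hfC
      rwa [hfadj] at h
    · ext x
      simp only [Set.mem_setOf_eq, SetLike.mem_coe]
      constructor
      · intro hx
        refine ⟨x, ?_⟩
        have h := stepB x hx
        rw [hfadj] at h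
        exact h.symm
      · rintro ⟨r, rfl⟩
        exact hC r f hfC
  · rintro ⟨e, he2, hea, hCs⟩
    have memC : ∀ w : G → K, w ∈ C ↔ ∃ r : G → K, w = tsMul Θ α r e := by
      intro w
      constructor
      · intro hw
        have hw' : w ∈ (C : Set (G → K)) := hw
        rw [hCs] at hw'
        exact hw'
      · intro hw
        have hw' : w ∈ ({x | ∃ r : G → K, x = tsMul Θ α r e} : Set (G → K)) := hw
        rw [← hCs] at hw'
        exact hw'
    constructor
    · intro x hxC hperp
      obtain ⟨r, rfl⟩ := (memC x).1 hxC
      funext g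
      show tsMul Θ α r e g = 0
      have hA := ts_adjoint_identity Θ α hnorm hcoc hstab hα2 (tsDelta g) e (tsMul Θ α r e)
      rw [hea, tsMul_assoc Θ α hcoc hstab, he2, ipE_delta] at hA
      have h0 : ipE (tsMul Θ α (tsDelta g) e) (tsMul Θ α r e) = 0 :=
        hperp _ ((memC _).2 ⟨tsDelta g, rfl⟩)
      rw [h0] at hA
      exact hA.symm
    · intro x
      refine ⟨tsMul Θ α x e, (memC _).2 ⟨x, rfl⟩, x - tsMul Θ α x e, ?_, by abel⟩
      intro c' hc'
      obtain ⟨r, rfl⟩ := (memC c').1 hc'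
      show ipE (tsMul Θ α r e) (x - tsMul Θ α x e) = 0
      have hsub : ipE (tsMul Θ α r e) (x - tsMul Θ α x e)
          = ipE (tsMul Θ α r e) x - ipE (tsMul Θ α r e) (tsMul Θ α x e) := by
        unfold ipE
        rw [← Finset.sum_sub_distrib]
        exact Finset.sum_congr rfl fun g _ => by
          show tsMul Θ α r e g * (x g - tsMul Θ α x e g) = _
          ring
      have hA := ts_adjoint_identity Θ α hnorm hcoc hstab hα2 (tsMul Θ α r e) e x
      rw [hea, tsMul_assoc Θ α hcoc hstab, he2] at hA
      rw [hsub, ← hA, sub_self]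
end
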